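/- For γ = 0 (so b(x) = -2x and σ(x) = |x| Π_{x⊥}), and A(x,y) as in the coupling matrix construction, one has for all x, y ∈ ℝ³: (x-y)·(b(x)-b(y)) + ‖σ(x) - A(x,y)‖² = -2|x||y| + 2 x·y ≤ 0. -/

import Mathlib

noncomputable section
open Matrix
open scoped Classical

abbrev E3 := EuclideanSpace ℝ (Fin 3)
abbrev M3 := Matrix (Fin 3) (Fin 3) ℝ

def proj3 (x : E3) : M3 :=
  1 - (‖x‖ ^ 2)⁻¹ • Matrix.vecMulVec (fun i => x i) (fun i => x i)

/-- Maxwell molecules case (`γ = 0`): `a(v) = |v|² Π_{v⊥}`. -/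
def amat0 (v : E3) : M3 := if v = 0 then 0 else (‖v‖ ^ 2) • proj3 v

/-- Maxwell molecules case: `σ(v) = |v| Π_{v⊥}`. -/
def sigmat0 (v : E3) : M3 := if v = 0 then 0 else ‖v‖ • proj3 v

/-- Maxwell molecules case: `b(v) = -2v`. -/
def bvec0 (v : E3) : E3 := (-2 : ℝ) • v

def frobSq (A : M3) : ℝ := Matrix.trace (A * Aᵀ)

lemma norm_sq_eq3 (v : E3) : ‖v‖ ^ 2 = ∑ i, v i * v i := by
  rw [← real_inner_self_eq_norm_sq, PiLp.inner_apply]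
  exact Finset.sum_congr rfl fun i _ => by rw [real_inner_self_eq_norm_sq, Real.norm_eq_abs, sq_abs, sq]

lemma trace_vmv (u v : Fin 3 → ℝ) :
    Matrix.trace (Matrix.vecMulVec u v) = ∑ i, u i * v i := by
  simp [Matrix.trace, Matrix.diag, Matrix.vecMulVec_apply]

lemma vmv_mul_vmv (u v w z : Fin 3 → ℝ) :
    Matrix.vecMulVec u v * Matrix.vecMulVec w z
      = (∑ i, v i * w i) • Matrix.vecMulVec u z := by
  ext i j
  simp only [Matrix.mul_apply, Matrix.vecMulVec_apply, Matrix.smul_apply, smul_eq_mul]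
  rw [Finset.sum_mul]
  exact Finset.sum_congr rfl fun k _ => by ring

lemma proj3_transpose (x : E3) : (proj3 x)ᵀ = proj3 x := by
  have h : (Matrix.vecMulVec (fun i => x i) (fun i => x i))ᵀ
      = Matrix.vecMulVec (fun i => x i) (fun i => x i) := by
    ext i j; simp [Matrix.vecMulVec_apply]; ring
  simp [proj3, Matrix.transpose_sub, Matrix.transpose_smul, h]

lemma proj3_idem (x : E3) (hx : x ≠ 0) : proj3 x * proj3 x = proj3 x := by
  have hn : ‖x‖ ^ 2 ≠ 0 := pow_ne_zero _ (norm_ne_zero_iff.mpr hx)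
  have hs : (∑ i, x i * x i) = ‖x‖ ^ 2 := (norm_sq_eq3 x).symm
  simp only [proj3, sub_mul, mul_sub, one_mul, mul_one, Matrix.smul_mul, Matrix.mul_smul,
    vmv_mul_vmv, hs, smul_smul]
  rw [inv_mul_cancel₀ hn]
  module

lemma sigma_sq (x : E3) : sigmat0 x * (sigmat0 x)ᵀ = amat0 x := by
  by_cases hx : x = 0
  · simp [sigmat0, amat0, hx]
  · simp only [sigmat0, amat0, if_neg hx, Matrix.transpose_smul, proj3_transpose,
      Matrix.smul_mul, Matrix.mul_smul, smul_smul, proj3_idem x hx]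
    rw [← sq]

lemma trace_amat0 (v : E3) : Matrix.trace (amat0 v) = 2 * ‖v‖ ^ 2 := by
  by_cases hv : v = 0
  · simp [amat0, hv]
  · have hn : ‖v‖ ^ 2 ≠ 0 := pow_ne_zero _ (norm_ne_zero_iff.mpr hv)
    have hs : (∑ i : Fin 3, v i * v i) = ‖v‖ ^ 2 := (norm_sq_eq3 v).symm
    simp only [amat0, if_neg hv, proj3, Matrix.trace_smul, Matrix.trace_sub,
      Matrix.trace_one, trace_vmv, hs, smul_eq_mul]
    rw [inv_mul_cancel₀ hn]
    simp [Fintype.card_fin]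
    ring

theorem maxwell_coupling_dissipation (x y : E3) (A : M3)
    (hAa : A * Aᵀ = amat0 y)
    (hAtr : Matrix.trace (sigmat0 x * Aᵀ) = ‖x‖ * ‖y‖ + (inner ℝ x y : ℝ)) :
    (inner ℝ (x - y) (bvec0 x - bvec0 y) : ℝ) + frobSq (sigmat0 x - A)
        = -2 * ‖x‖ * ‖y‖ + 2 * (inner ℝ x y : ℝ) ∧
    (inner ℝ (x - y) (bvec0 x - bvec0 y) : ℝ) + frobSq (sigmat0 x - A) ≤ 0 := by
  have hb : (inner ℝ (x - y) (bvec0 x - bvec0 y) : ℝ) = -2 * ‖x - y‖ ^ 2 := by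
    have : bvec0 x - bvec0 y = (-2 : ℝ) • (x - y) := by
      simp [bvec0, smul_sub]
    rw [this, real_inner_smul_right, real_inner_self_eq_norm_sq]
  have hxy : ‖x - y‖ ^ 2 = ‖x‖ ^ 2 - 2 * (inner ℝ x y : ℝ) + ‖y‖ ^ 2 := by
    rw [norm_sub_sq_real]
  have hAsym : Matrix.trace (A * (sigmat0 x)ᵀ) = Matrix.trace (sigmat0 x * Aᵀ) := by
    rw [← Matrix.trace_transpose (A * (sigmat0 x)ᵀ), Matrix.transpose_mul,
      Matrix.transpose_transpose]
  have hfrob : frobSq (sigmat0 x - A)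
      = 2 * ‖x‖ ^ 2 + 2 * ‖y‖ ^ 2 - 2 * (‖x‖ * ‖y‖ + (inner ℝ x y : ℝ)) := by
    unfold frobSq
    rw [Matrix.transpose_sub, sub_mul, mul_sub, mul_sub, Matrix.trace_sub, Matrix.trace_sub,
      Matrix.trace_sub, sigma_sq, hAa, trace_amat0, trace_amat0, hAsym, hAtr]
    ring
  have heq : (inner ℝ (x - y) (bvec0 x - bvec0 y) : ℝ) + frobSq (sigmat0 x - A)
      = -2 * ‖x‖ * ‖y‖ + 2 * (inner ℝ x y : ℝ) := by
    rw [hb, hxy, hfrob]; ring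
  refine ⟨heq, heq ▸ ?_⟩
  have := real_inner_le_norm x y
  nlinarith [this]
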